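/- Let (c_n)_{n≥1} be a sequence in ℤ_p satisfying c_{k·p^{r+1}} ≡ c_{k·p^r} (mod p^{r+1}) for all k, r ∈ ℕ. Then the formal power series exp(∑_{n=1}^∞ (c_n/n) x^n) has all its coefficients in ℤ_p. -/

import Mathlib

open PowerSeries Finset

namespace DworkAux

/-! ### Generic coefficient-vanishing lemmas -/

section General
variable {R : Type*} [CommRing R]

lemma coeff_mul_eq_zero {u v : R⟦X⟧} {s t : ℕ} (hu : ∀ i < s, coeff i u = 0)
    (hv : ∀ i < t, coeff i v = 0) {j : ℕ} (hj : j < s + t) : coeff j (u * v) = 0 := by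
  rw [PowerSeries.coeff_mul]
  refine Finset.sum_eq_zero ?_
  rintro ⟨a, b⟩ hab
  rw [Finset.HasAntidiagonal.mem_antidiagonal] at hab
  rcases lt_or_ge a s with h | h
  · rw [hu a h, zero_mul]
  · rw [hv b (by omega), mul_zero]

lemma coeff_pow_eq_zero {v : R⟦X⟧} {s : ℕ} (hv : ∀ i < s, coeff i v = 0) :
    ∀ (k : ℕ) {j : ℕ}, j < k * s → coeff j (v ^ k) = 0 := by
  intro k
  induction k with
  | zero => intro j hj; omega
  | succ n ih =>
    intro j hj
    rw [pow_succ]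
    have hns : (n + 1) * s = n * s + s := by ring
    exact coeff_mul_eq_zero (fun i hi => ih hi) hv (by omega)

lemma coeff_pow_eq_zero' {v : R⟦X⟧} (hv : constantCoeff v = 0) {k j : ℕ} (hj : j < k) :
    coeff j (v ^ k) = 0 := by
  refine coeff_pow_eq_zero (s := 1) ?_ k (by omega)
  intro i hi
  have : i = 0 := by omega
  subst this
  simpa [PowerSeries.coeff_zero_eq_constantCoeff] using hv

end General

/-! ### The exponential-type series -/

variable {p : ℕ} [Fact p.Prime]

/-- `A g N` is the `N`-th coefficient of `exp g`. -/
noncomputable def A (g : ℚ_[p]⟦X⟧) (N : ℕ) : ℚ_[p] :=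
  ∑ k ∈ Finset.range (N + 1), (coeff N (g ^ k)) / (k.factorial : ℚ_[p])

noncomputable def E (g : ℚ_[p]⟦X⟧) : ℚ_[p]⟦X⟧ := PowerSeries.mk (A g)

lemma coeff_E (g : ℚ_[p]⟦X⟧) (N : ℕ) : coeff N (E g) = A g N := coeff_mk _ _

lemma A_zero (g : ℚ_[p]⟦X⟧) : A g 0 = 1 := by
  simp [A]

lemma constantCoeff_E (g : ℚ_[p]⟦X⟧) : constantCoeff (E g) = 1 := by
  rw [E, constantCoeff_mk, A_zero]

/-- partial sums of the exponential -/
noncomputable def S (g : ℚ_[p]⟦X⟧) (M : ℕ) : ℚ_[p]⟦X⟧ :=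
  ∑ k ∈ Finset.range (M + 1), (k.factorial : ℚ_[p])⁻¹ • g ^ k

lemma coeff_S {g : ℚ_[p]⟦X⟧} (hg : constantCoeff g = 0) {j M : ℕ} (hjM : j ≤ M) :
    coeff j (S g M) = A g j := by
  have h1 : coeff j (S g M)
      = ∑ k ∈ Finset.range (M + 1), (coeff j (g ^ k)) / (k.factorial : ℚ_[p]) := by
    rw [S, map_sum]
    refine Finset.sum_congr rfl fun k _ => ?_
    rw [map_smul, smul_eq_mul, inv_mul_eq_div]
  rw [h1, A]
  refine (Finset.sum_subset (Finset.range_subset_range.mpr (by omega)) ?_).symm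
  intro k hk hknot
  rw [Finset.mem_range] at hk hknot
  rw [coeff_pow_eq_zero' hg (by omega), zero_div]

lemma derivative_E {g : ℚ_[p]⟦X⟧} (hg : constantCoeff g = 0) :
    d⁄dX ℚ_[p] (E g) = d⁄dX ℚ_[p] g * E g := by
  have step : ∀ m : ℕ, d⁄dX ℚ_[p] (((m + 1).factorial : ℚ_[p])⁻¹ • g ^ (m + 1))
      = d⁄dX ℚ_[p] g * ((m.factorial : ℚ_[p])⁻¹ • g ^ m) := by
    intro m
    rw [Derivation.map_smul, Derivation.leibniz_pow, Nat.add_sub_cancel, smul_eq_mul,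
      ← Nat.cast_smul_eq_nsmul ℚ_[p] (m + 1), smul_smul]
    have hfac : (((m + 1).factorial : ℚ_[p]))⁻¹ * ((m + 1 : ℕ) : ℚ_[p])
        = ((m.factorial : ℚ_[p]))⁻¹ := by
      rw [Nat.factorial_succ]
      have h1 : ((m : ℚ_[p]) + 1) ≠ 0 := Nat.cast_add_one_ne_zero m
      have h2 : ((m.factorial : ℚ_[p])) ≠ 0 := Nat.cast_ne_zero.mpr m.factorial_ne_zero
      push_cast
      field_simp
    rw [hfac, PowerSeries.smul_eq_C_mul, PowerSeries.smul_eq_C_mul]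
    ring
  have key : ∀ N : ℕ, d⁄dX ℚ_[p] (S g (N + 1)) = d⁄dX ℚ_[p] g * S g N := by
    intro N
    rw [S, map_sum, Finset.sum_range_succ']
    have h0 : d⁄dX ℚ_[p] (((Nat.factorial 0 : ℚ_[p]))⁻¹ • g ^ 0) = 0 := by
      simp
    rw [h0, add_zero]
    rw [Finset.sum_congr rfl fun m _ => step m]
    rw [S, Finset.mul_sum]
  ext N
  have hc1 := congrArg (coeff N) (key N)
  rw [PowerSeries.coeff_derivative, coeff_S hg (le_refl (N + 1)),
    PowerSeries.coeff_mul] at hc1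
  rw [PowerSeries.coeff_derivative, coeff_E, PowerSeries.coeff_mul]
  rw [hc1]
  refine Finset.sum_congr rfl ?_
  rintro ⟨i, j⟩ hij
  rw [Finset.HasAntidiagonal.mem_antidiagonal] at hij
  rw [coeff_S hg (by omega : j ≤ N), coeff_E]

lemma ode_unique {q f h : ℚ_[p]⟦X⟧} (hf : d⁄dX ℚ_[p] f = q * f) (hh : d⁄dX ℚ_[p] h = q * h)
    (h0 : constantCoeff f = constantCoeff h) : f = h := by
  have key : ∀ N, coeff N (f - h) = 0 := by
    intro N
    induction N using Nat.strong_induction_on with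
    | _ N ih =>
      match N with
      | 0 =>
        rw [map_sub, PowerSeries.coeff_zero_eq_constantCoeff_apply,
          PowerSeries.coeff_zero_eq_constantCoeff_apply, h0, sub_self]
      | (n + 1) =>
        have hD : coeff n (d⁄dX ℚ_[p] (f - h)) = coeff n (q * (f - h)) := by
          rw [Derivation.map_sub, hf, hh, ← mul_sub]
        rw [PowerSeries.coeff_derivative, PowerSeries.coeff_mul] at hD
        have hz : ∑ x ∈ Finset.HasAntidiagonal.antidiagonal n,
            coeff x.1 q * coeff x.2 (f - h) = 0 := by
          refine Finset.sum_eq_zero ?_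
          rintro ⟨i, j⟩ hij
          rw [Finset.HasAntidiagonal.mem_antidiagonal] at hij
          rw [ih j (by omega), mul_zero]
        rw [hz] at hD
        have hne : ((n : ℚ_[p]) + 1) ≠ 0 := Nat.cast_add_one_ne_zero n
        exact (mul_eq_zero.mp hD).resolve_right hne
  ext N
  have := key N
  rwa [map_sub, sub_eq_zero] at this

/-! ### The expand-by-p operator -/

noncomputable def ex (f : ℚ_[p]⟦X⟧) : ℚ_[p]⟦X⟧ :=
  PowerSeries.mk fun N => if p ∣ N then coeff (N / p) f else 0

lemma coeff_ex (f : ℚ_[p]⟦X⟧) (N : ℕ) :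
    coeff N (ex f) = if p ∣ N then coeff (N / p) f else 0 := coeff_mk _ _

lemma constantCoeff_ex (f : ℚ_[p]⟦X⟧) :
    constantCoeff (ex f) = constantCoeff f := by
  rw [ex, constantCoeff_mk, if_pos (dvd_zero p), Nat.zero_div,
    PowerSeries.coeff_zero_eq_constantCoeff_apply]

lemma hp_pos : 0 < p := (Fact.out : p.Prime).pos

lemma ex_one : ex (p := p) 1 = 1 := by
  ext N
  rw [coeff_ex]
  rcases Nat.eq_zero_or_pos N with rfl | hN
  · simp
  · simp only [PowerSeries.coeff_one]
    by_cases hd : p ∣ N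
    · have h1 : p ≤ N := Nat.le_of_dvd hN hd
      have h2 := Nat.div_pos h1 (hp_pos (p := p))
      rw [if_pos hd, if_neg (show ¬ N / p = 0 by omega), if_neg (show ¬ N = 0 by omega)]
    · rw [if_neg hd, if_neg (show ¬ N = 0 by omega)]

def pemb (p : ℕ) (hp : 0 < p) : ℕ × ℕ ↪ ℕ × ℕ where
  toFun := fun x => (p * x.1, p * x.2)
  inj' := by
    rintro ⟨a, b⟩ ⟨a', b'⟩ hab
    simp only [Prod.mk.injEq] at hab
    exact Prod.ext (Nat.eq_of_mul_eq_mul_left hp hab.1)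
      (Nat.eq_of_mul_eq_mul_left hp hab.2)

@[simp] lemma pemb_apply (p : ℕ) (hp : 0 < p) (x : ℕ × ℕ) :
    pemb p hp x = (p * x.1, p * x.2) := rfl

lemma ex_mul (u v : ℚ_[p]⟦X⟧) : ex (u * v) = ex u * ex v := by
  have hp : 0 < p := hp_pos
  ext N
  rw [coeff_ex]
  by_cases hN : p ∣ N
  · obtain ⟨M, rfl⟩ := hN
    rw [if_pos (Dvd.intro M rfl), Nat.mul_div_cancel_left M hp, PowerSeries.coeff_mul,
      PowerSeries.coeff_mul]
    have hsub : (Finset.HasAntidiagonal.antidiagonal M).map (pemb p hp) ⊆ Finset.HasAntidiagonal.antidiagonal (p * M) := by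
      intro x hx
      rw [Finset.mem_map] at hx
      obtain ⟨⟨a, b⟩, hab, rfl⟩ := hx
      rw [Finset.HasAntidiagonal.mem_antidiagonal] at hab
      rw [pemb_apply, Finset.HasAntidiagonal.mem_antidiagonal]
      show p * a + p * b = p * M
      rw [← Nat.mul_add, hab]
    have hzero : ∀ x ∈ Finset.HasAntidiagonal.antidiagonal (p * M), x ∉ (Finset.HasAntidiagonal.antidiagonal M).map (pemb p hp) →
        coeff x.1 (ex u) * coeff x.2 (ex v) = 0 := by
      rintro ⟨i, j⟩ hij hnot
      rw [Finset.HasAntidiagonal.mem_antidiagonal] at hij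
      by_cases hi : p ∣ i
      · by_cases hj : p ∣ j
        · exfalso
          apply hnot
          rw [Finset.mem_map]
          obtain ⟨a, rfl⟩ := hi
          obtain ⟨b, rfl⟩ := hj
          refine ⟨(a, b), ?_, rfl⟩
          rw [Finset.HasAntidiagonal.mem_antidiagonal]
          have h3 : p * (a + b) = p * M := by rw [Nat.mul_add]; exact hij
          exact Nat.eq_of_mul_eq_mul_left hp h3
        · show coeff i (ex u) * coeff j (ex v) = 0
          rw [coeff_ex v, if_neg hj, mul_zero]
      · show coeff i (ex u) * coeff j (ex v) = 0
        rw [coeff_ex u, if_neg hi, zero_mul]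
    rw [← Finset.sum_subset hsub hzero, Finset.sum_map]
    refine Finset.sum_congr rfl ?_
    rintro ⟨a, b⟩ hab
    show coeff a u * coeff b v
        = coeff (p * a) (ex u) * coeff (p * b) (ex v)
    rw [coeff_ex, coeff_ex, if_pos (Dvd.intro a rfl), if_pos (Dvd.intro b rfl),
      Nat.mul_div_cancel_left a hp, Nat.mul_div_cancel_left b hp]
  · rw [if_neg hN, PowerSeries.coeff_mul]
    symm
    apply Finset.sum_eq_zero
    rintro ⟨i, j⟩ hij
    rw [Finset.HasAntidiagonal.mem_antidiagonal] at hij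
    by_cases hi : p ∣ i
    · by_cases hj : p ∣ j
      · exact absurd (hij ▸ Nat.dvd_add hi hj) hN
      · show coeff i (ex u) * coeff j (ex v) = 0
        rw [coeff_ex v, if_neg hj, mul_zero]
    · show coeff i (ex u) * coeff j (ex v) = 0
      rw [coeff_ex u, if_neg hi, zero_mul]

lemma ex_pow (f : ℚ_[p]⟦X⟧) (k : ℕ) : ex (f ^ k) = (ex f) ^ k := by
  induction k with
  | zero => rw [pow_zero, pow_zero, ex_one]
  | succ n ih => rw [pow_succ, pow_succ, ex_mul, ih]

lemma E_ex {g : ℚ_[p]⟦X⟧} (hg : constantCoeff g = 0) : E (ex g) = ex (E g) := by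
  have hp : 0 < p := hp_pos
  ext N
  rw [coeff_E, coeff_ex, coeff_E]
  by_cases hN : p ∣ N
  · rw [if_pos hN]
    have h1 : ∀ k : ℕ, coeff N ((ex g) ^ k) = coeff (N / p) (g ^ k) := by
      intro k
      rw [← ex_pow, coeff_ex, if_pos hN]
    unfold A
    rw [Finset.sum_congr rfl fun k _ => by rw [h1 k]]
    refine (Finset.sum_subset (Finset.range_subset_range.mpr ?_) ?_).symm
    · have := Nat.div_le_self N p
      omega
    · intro k hk hknot
      rw [Finset.mem_range] at hk hknot
      rw [coeff_pow_eq_zero' hg (by omega), zero_div]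
  · rw [if_neg hN]
    unfold A
    refine Finset.sum_eq_zero fun k _ => ?_
    rw [← ex_pow, coeff_ex, if_neg hN, zero_div]

/-! ### The functional equation -/

section Main

variable (c : ℕ → ℤ_[p])

noncomputable def g : ℚ_[p]⟦X⟧ :=
  PowerSeries.mk fun n => if n = 0 then 0 else ((c n : ℚ_[p]) / (n : ℚ_[p]))

lemma hg0 : constantCoeff (g c) = 0 := by
  rw [g, constantCoeff_mk, if_pos rfl]

noncomputable def h : ℚ_[p]⟦X⟧ := C (p : ℚ_[p]) * g c - ex (g c)

lemma hh0 : constantCoeff (h c) = 0 := by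
  rw [h, map_sub, map_mul, constantCoeff_ex, constantCoeff_C, hg0, mul_zero, sub_self]

lemma hsplit : ex (g c) + h c = C (p : ℚ_[p]) * g c := by
  rw [h]; ring

/-- The Dwork functional equation. -/
lemma main_eq : (E (g c)) ^ p = ex (E (g c)) * E (h c) := by
  have hp1 : 1 ≤ p := hp_pos (p := p)
  refine ode_unique (q := C (p : ℚ_[p]) * d⁄dX ℚ_[p] (g c)) ?_ ?_ ?_
  · rw [Derivation.leibniz_pow, derivative_E (hg0 c)]
    rw [smul_eq_mul, ← Nat.cast_smul_eq_nsmul ℚ_[p]⟦X⟧ p, smul_eq_mul]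
    have hC : ((p : ℕ) : ℚ_[p]⟦X⟧) = C (p : ℚ_[p]) := by
      rw [← map_natCast (C (R := ℚ_[p])) p]
    have hpow : E (g c) ^ (p - 1) * E (g c) = E (g c) ^ p := by
      rw [← pow_succ]
      congr 1
      omega
    calc ((p : ℕ) : ℚ_[p]⟦X⟧) * (E (g c) ^ (p - 1) * (d⁄dX ℚ_[p] (g c) * E (g c)))
        = ((p : ℕ) : ℚ_[p]⟦X⟧) * d⁄dX ℚ_[p] (g c) * (E (g c) ^ (p - 1) * E (g c)) := by ring
      _ = C (p : ℚ_[p]) * d⁄dX ℚ_[p] (g c) * E (g c) ^ p := by rw [hC, hpow]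
  · have hgex : constantCoeff (ex (g c)) = 0 := by
      rw [constantCoeff_ex, hg0]
    have hdex : d⁄dX ℚ_[p] (ex (E (g c))) = d⁄dX ℚ_[p] (ex (g c)) * ex (E (g c)) := by
      rw [← E_ex (hg0 c), derivative_E hgex]
    rw [Derivation.leibniz, hdex, derivative_E (hh0 c), smul_eq_mul, smul_eq_mul]
    have hq : d⁄dX ℚ_[p] (ex (g c)) + d⁄dX ℚ_[p] (h c)
        = C (p : ℚ_[p]) * d⁄dX ℚ_[p] (g c) := by
      rw [← Derivation.map_add, hsplit, Derivation.leibniz, PowerSeries.derivative_C,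
        smul_eq_mul, smul_eq_mul, mul_zero, add_zero]
    calc ex (E (g c)) * (d⁄dX ℚ_[p] (h c) * E (h c))
          + E (h c) * (d⁄dX ℚ_[p] (ex (g c)) * ex (E (g c)))
        = (d⁄dX ℚ_[p] (ex (g c)) + d⁄dX ℚ_[p] (h c)) * (ex (E (g c)) * E (h c)) := by ring
      _ = C (p : ℚ_[p]) * d⁄dX ℚ_[p] (g c) * (ex (E (g c)) * E (h c)) := by rw [hq]
  · simp [map_pow, map_mul, constantCoeff_E, constantCoeff_ex]

end Main

/-! ### Norm estimates -/

lemma norm_natCast {n : ℕ} (hn : n ≠ 0) :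
    ‖(n : ℚ_[p])‖ = (p : ℝ) ^ (-(padicValNat p n : ℤ)) := by
  have hp : p.Prime := Fact.out
  set r := n.factorization p with hr
  have hdecomp : p ^ r * (n / p ^ r) = n := Nat.ordProj_mul_ordCompl_eq_self n p
  have hm : ¬ p ∣ n / p ^ r := Nat.not_dvd_ordCompl hp hn
  have hm1 : ‖((n / p ^ r : ℕ) : ℚ_[p])‖ = 1 := by
    refine le_antisymm ?_ ?_
    · have h1 := Padic.norm_int_le_one (p := p) ((n / p ^ r : ℕ) : ℤ)
      exact_mod_cast h1
    · by_contra hlt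
      push_neg at hlt
      have h2 : ‖(((n / p ^ r : ℕ) : ℤ) : ℚ_[p])‖ < 1 := by exact_mod_cast hlt
      have h3 := (Padic.norm_intCast_lt_one_iff).mp h2
      rw [Int.natCast_dvd_natCast] at h3
      exact hm h3
  have hval : r = padicValNat p n := Nat.factorization_def n hp
  calc ‖(n : ℚ_[p])‖ = ‖((p ^ r * (n / p ^ r) : ℕ) : ℚ_[p])‖ := by rw [hdecomp]
    _ = ‖((p : ℚ_[p])) ^ r‖ * ‖((n / p ^ r : ℕ) : ℚ_[p])‖ := by push_cast; rw [norm_mul]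
    _ = ‖((p : ℚ_[p])) ^ r‖ := by rw [hm1, mul_one]
    _ = (p : ℝ) ^ (-(r : ℤ)) := by
        rw [← zpow_natCast, Padic.norm_p_zpow]
    _ = (p : ℝ) ^ (-(padicValNat p n : ℤ)) := by rw [hval]

lemma norm_zint_le_one (x : ℤ_[p]) : ‖(x : ℚ_[p])‖ ≤ 1 := by
  rw [PadicInt.padic_norm_e_of_padicInt]
  exact PadicInt.norm_le_one x

lemma padicValNat_factorial_le {k : ℕ} (hk : 1 ≤ k) : padicValNat p k.factorial ≤ k - 1 := by
  have hp : p.Prime := Fact.out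
  have h2 : 2 ≤ p := hp.two_le
  have hs : 1 ≤ (p.digits k).sum := by
    rcases Nat.eq_zero_or_pos ((p.digits k).sum) with h0 | h1
    · exfalso
      have hall : ∀ d ∈ p.digits k, d = 0 := List.sum_eq_zero_iff.mp h0
      have hne : p.digits k ≠ [] := Nat.digits_ne_nil_iff_ne_zero.mpr (by omega)
      have hlast := Nat.getLast_digit_ne_zero p (show k ≠ 0 by omega)
      exact hlast (hall _ (List.getLast_mem hne))
    · omega
  have hkey := sub_one_mul_padicValNat_factorial (p := p) k
  have hle : padicValNat p k.factorial ≤ (p - 1) * padicValNat p k.factorial :=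
    Nat.le_mul_of_pos_left _ (by omega)
  omega

lemma norm_coeff_pow {v : ℚ_[p]⟦X⟧} {ρ : ℝ} (h0 : 0 ≤ ρ) (h1 : ρ ≤ 1)
    (hv : ∀ n, ‖coeff n v‖ ≤ ρ) (k : ℕ) : ∀ N : ℕ, ‖coeff N (v ^ k)‖ ≤ ρ ^ k := by
  induction k with
  | zero =>
    intro N
    rw [pow_zero, pow_zero, PowerSeries.coeff_one]
    split
    · simp
    · simp
  | succ n ih =>
    intro N
    rw [pow_succ, PowerSeries.coeff_mul, pow_succ]
    refine IsUltrametricDist.norm_sum_le_of_forall_le_of_nonneg (by positivity) ?_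
    rintro ⟨i, j⟩ _
    calc ‖coeff i (v ^ n) * coeff j v‖
        = ‖coeff i (v ^ n)‖ * ‖coeff j v‖ := norm_mul _ _
      _ ≤ ρ ^ n * ρ := mul_le_mul (ih i) (hv j) (norm_nonneg _) (by positivity)

lemma norm_A_le {v : ℚ_[p]⟦X⟧} (hv : ∀ n, ‖coeff n v‖ ≤ (p : ℝ)⁻¹) {N : ℕ} (hN : 1 ≤ N) :
    ‖A v N‖ ≤ (p : ℝ)⁻¹ := by
  have hp : p.Prime := Fact.out
  have hp1 : (1 : ℝ) < p := by exact_mod_cast hp.one_lt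
  have hpne : (p : ℝ) ≠ 0 := by positivity
  have hpinv0 : (0 : ℝ) ≤ (p : ℝ)⁻¹ := by positivity
  refine IsUltrametricDist.norm_sum_le_of_forall_le_of_nonneg hpinv0 ?_
  intro k _
  rcases Nat.eq_zero_or_pos k with rfl | hk1
  · rw [pow_zero, PowerSeries.coeff_one, if_neg (by omega), zero_div, norm_zero]
    exact hpinv0
  · rw [div_eq_mul_inv, norm_mul, norm_inv]
    have hknorm : ‖coeff N (v ^ k)‖ ≤ ((p : ℝ)⁻¹) ^ k :=
      norm_coeff_pow hpinv0 (by rw [inv_le_one_iff₀]; right; exact hp1.le) hv k N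
    have hfacnorm : ‖((k.factorial : ℚ_[p]))‖ = (p : ℝ) ^ (-(padicValNat p k.factorial : ℤ)) :=
      norm_natCast k.factorial_ne_zero
    have hv1 : (padicValNat p k.factorial : ℤ) ≤ (k : ℤ) - 1 := by
      have h6 := padicValNat_factorial_le (p := p) hk1
      omega
    have e1 : ‖((k.factorial : ℚ_[p]))‖⁻¹ = (p : ℝ) ^ ((padicValNat p k.factorial : ℤ)) := by
      rw [hfacnorm, ← zpow_neg, neg_neg]
    have e2 : (p : ℝ) ^ ((padicValNat p k.factorial : ℤ)) ≤ (p : ℝ) ^ ((k : ℤ) - 1) :=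
      zpow_le_zpow_right₀ hp1.le hv1
    have e3 : ((p : ℝ)⁻¹) ^ k = (p : ℝ) ^ (-(k : ℤ)) := by
      rw [inv_pow, ← zpow_natCast, ← zpow_neg]
    calc ‖coeff N (v ^ k)‖ * ‖((k.factorial : ℚ_[p]))‖⁻¹
        ≤ (p : ℝ) ^ (-(k : ℤ)) * (p : ℝ) ^ ((k : ℤ) - 1) := by
          rw [e1]
          exact mul_le_mul (e3 ▸ hknorm) e2 (by positivity) (by positivity)
      _ = (p : ℝ) ^ (-(1 : ℤ)) := by
          rw [← zpow_add₀ hpne, show -(k : ℤ) + ((k : ℤ) - 1) = -1 by ring]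
      _ = (p : ℝ)⁻¹ := by norm_num

section Main2

variable (c : ℕ → ℤ_[p])

lemma coeff_g {n : ℕ} (hn : n ≠ 0) :
    coeff n (g c) = (c n : ℚ_[p]) / (n : ℚ_[p]) := by
  rw [g, coeff_mk, if_neg hn]

lemma hh_norm (hc : ∀ k r : ℕ, (p : ℤ_[p]) ^ (r + 1) ∣ c (k * p ^ (r + 1)) - c (k * p ^ r))
    (n : ℕ) : ‖coeff n (h c)‖ ≤ (p : ℝ)⁻¹ := by
  have hp : p.Prime := Fact.out
  have hppos : 0 < p := hp.pos
  have hpinv0 : (0 : ℝ) ≤ (p : ℝ)⁻¹ := by positivity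
  rcases Nat.eq_zero_or_pos n with rfl | hn
  · have h7 : coeff 0 (h c) = 0 := by
      rw [PowerSeries.coeff_zero_eq_constantCoeff_apply, hh0]
    rw [h7, norm_zero]
    exact hpinv0
  have hcoeff : coeff n (h c)
      = (p : ℚ_[p]) * ((c n : ℚ_[p]) / (n : ℚ_[p]))
        - (if p ∣ n then coeff (n / p) (g c) else 0) := by
    rw [h, map_sub, PowerSeries.coeff_C_mul, coeff_ex, coeff_g c (by omega)]
  by_cases hd : p ∣ n
  · set r := n.factorization p with hrdef
    have hr1 : 1 ≤ r := hp.factorization_pos_of_dvd (by omega) hd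
    set k0 := n / p ^ r with hk0
    have hdecomp : p ^ r * k0 = n := Nat.ordProj_mul_ordCompl_eq_self n p
    have hn' : k0 * p ^ r = n := by rw [mul_comm]; exact hdecomp
    have hnp : n / p = k0 * p ^ (r - 1) := by
      have h8 : p ^ r = p ^ (r - 1) * p := by
        rw [← pow_succ]
        congr 1
        omega
      rw [← hn', h8, ← mul_assoc, Nat.mul_div_cancel _ hppos]
    have hdvd : (p : ℤ_[p]) ^ r ∣ c n - c (n / p) := by
      have h5 := hc k0 (r - 1)
      have he : r - 1 + 1 = r := by omega
      rw [he, hn'] at h5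
      rw [hnp]
      exact h5
    have hnormdiff : ‖((c n - c (n / p) : ℤ_[p]) : ℚ_[p])‖ ≤ (p : ℝ) ^ (-(r : ℤ)) := by
      rw [PadicInt.padic_norm_e_of_padicInt]
      obtain ⟨y, hy⟩ := hdvd
      rw [hy, norm_mul, PadicInt.norm_p_pow]
      calc (p : ℝ) ^ (-(r : ℤ)) * ‖y‖ ≤ (p : ℝ) ^ (-(r : ℤ)) * 1 := by
            refine mul_le_mul_of_nonneg_left (PadicInt.norm_le_one y) (by positivity)
        _ = (p : ℝ) ^ (-(r : ℤ)) := mul_one _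
    have hnval : ‖(n : ℚ_[p])‖ = (p : ℝ) ^ (-(r : ℤ)) := by
      rw [norm_natCast (by omega : n ≠ 0), hrdef, Nat.factorization_def n hp]
    have hnppos : 1 ≤ n / p := Nat.div_pos (Nat.le_of_dvd hn hd) hppos
    have hexp : coeff n (h c)
        = (p : ℚ_[p]) * ((c n : ℚ_[p]) - (c (n / p) : ℚ_[p])) / (n : ℚ_[p]) := by
      rw [hcoeff, if_pos hd, coeff_g c (by omega : n / p ≠ 0)]
      have hp0 : (p : ℚ_[p]) ≠ 0 := Nat.cast_ne_zero.mpr (by omega)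
      have hn0 : (n : ℚ_[p]) ≠ 0 := Nat.cast_ne_zero.mpr (by omega)
      have hnp2 : ((n / p : ℕ) : ℚ_[p]) = (n : ℚ_[p]) / (p : ℚ_[p]) := Nat.cast_div hd hp0
      rw [hnp2]
      field_simp
    rw [hexp, norm_div, norm_mul, hnval, Padic.norm_p]
    have h9 : ‖(c n : ℚ_[p]) - (c (n / p) : ℚ_[p])‖ ≤ (p : ℝ) ^ (-(r : ℤ)) := by
      have : ((c n - c (n / p) : ℤ_[p]) : ℚ_[p]) = (c n : ℚ_[p]) - (c (n / p) : ℚ_[p]) := by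
        push_cast
        ring
      rw [← this]
      exact hnormdiff
    have hzpos : (0 : ℝ) < (p : ℝ) ^ (-(r : ℤ)) := by positivity
    calc ((p : ℝ))⁻¹ * ‖(c n : ℚ_[p]) - (c (n / p) : ℚ_[p])‖ / (p : ℝ) ^ (-(r : ℤ))
        ≤ ((p : ℝ))⁻¹ * ((p : ℝ) ^ (-(r : ℤ))) / (p : ℝ) ^ (-(r : ℤ)) := by
          gcongr
      _ = (p : ℝ)⁻¹ := by
          rw [mul_div_assoc, div_self (ne_of_gt hzpos), mul_one]
  · have hnn : ‖(n : ℚ_[p])‖ = 1 := by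
      rw [norm_natCast (by omega : n ≠ 0), padicValNat.eq_zero_of_not_dvd hd]
      norm_num
    rw [hcoeff, if_neg hd, sub_zero, ← mul_div_assoc, norm_div, hnn, div_one, norm_mul,
      Padic.norm_p]
    calc (p : ℝ)⁻¹ * ‖(c n : ℚ_[p])‖ ≤ (p : ℝ)⁻¹ * 1 := by
          exact mul_le_mul_of_nonneg_left (norm_zint_le_one _) hpinv0
      _ = (p : ℝ)⁻¹ := mul_one _

/-! ### The main induction -/

theorem norm_A_g_le (hc : ∀ k r : ℕ, (p : ℤ_[p]) ^ (r + 1) ∣ c (k * p ^ (r + 1)) - c (k * p ^ r)) :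
    ∀ N : ℕ, ‖A (g c) N‖ ≤ 1 := by
  intro N
  induction N using Nat.strong_induction_on with
  | _ N ih =>
  rcases Nat.eq_zero_or_pos N with rfl | hN
  · rw [A_zero]
    norm_num
  have hp : p.Prime := Fact.out
  have hppos : 0 < p := hp.pos
  have hp2 : 2 ≤ p := hp.two_le
  have hpR : (0 : ℝ) < (p : ℝ)⁻¹ := by positivity
  set a : ℕ → ℚ_[p] := A (g c) with ha
  set b : ℕ → ℤ_[p] := fun j => if hj : ‖a j‖ ≤ 1 then ⟨a j, hj⟩ else 0 with hb
  have hbv : ∀ j, j < N → ((b j : ℚ_[p])) = a j := by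
    intro j hj
    simp only [hb]
    exact congrArg (fun z : ℤ_[p] => (z : ℚ_[p])) (dif_pos (ih j hj))
  set P : Polynomial ℤ_[p] := ∑ i ∈ Finset.range N, Polynomial.C (b i) * Polynomial.X ^ i
    with hP
  have hPcoeff : ∀ j, P.coeff j = if j < N then b j else 0 := by
    intro j
    rw [hP, Polynomial.finset_sum_coeff]
    simp only [Polynomial.coeff_C_mul, Polynomial.coeff_X_pow, mul_ite, mul_one, mul_zero]
    rw [Finset.sum_ite_eq (Finset.range N) j b]
    by_cases hj : j < N
    · rw [if_pos (Finset.mem_range.mpr hj), if_pos hj]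
    · rw [if_neg (fun hmem => hj (Finset.mem_range.mp hmem)), if_neg hj]
  set T : ℚ_[p]⟦X⟧ := (↑(P.map (PadicInt.Coe.ringHom)) : ℚ_[p]⟦X⟧) with hTdef
  have hT : ∀ j, coeff j T = if j < N then a j else 0 := by
    intro j
    rw [hTdef, Polynomial.coeff_coe, Polynomial.coeff_map, hPcoeff]
    by_cases hj : j < N
    · rw [if_pos hj, if_pos hj]
      exact hbv j hj
    · rw [if_neg hj, if_neg hj, map_zero]
  set D : ℚ_[p]⟦X⟧ := E (g c) - T with hDdef
  have hD : ∀ i, i < N → coeff i D = 0 := by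
    intro i hi
    rw [hDdef, map_sub, coeff_E, hT, if_pos hi, sub_self]
  have hDN : coeff N D = a N := by
    rw [hDdef, map_sub, coeff_E, hT, if_neg (lt_irrefl N), sub_zero]
  have hT0 : constantCoeff T = 1 := by
    rw [← PowerSeries.coeff_zero_eq_constantCoeff_apply, hT, if_pos hN, ha, A_zero]
  -- step 1 : coefficient of the p-th power
  have step1 : coeff N (E (g c) ^ p)
      = coeff N (T ^ p) + (p : ℚ_[p]) * a N := by
    have hEg : E (g c) ^ p = (T + D) ^ p := by rw [hDdef]; ring_nf
    rw [hEg, add_pow, map_sum, Finset.sum_range_succ,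
      show Finset.range p = Finset.range (p - 1 + 1) by rw [Nat.sub_add_cancel (by omega)],
      Finset.sum_range_succ]
    have hfp : coeff N (T ^ p * D ^ (p - p) * ((p.choose p : ℕ) : ℚ_[p]⟦X⟧))
        = coeff N (T ^ p) := by
      rw [Nat.sub_self, pow_zero, mul_one, Nat.choose_self, Nat.cast_one, mul_one]
    have hfp1 : coeff N (T ^ (p - 1) * D ^ (p - (p - 1))
        * ((p.choose (p - 1) : ℕ) : ℚ_[p]⟦X⟧)) = (p : ℚ_[p]) * a N := by
      have h1 : p - (p - 1) = 1 := by omega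
      have h2 : p.choose (p - 1) = p := by
        have h3 := Nat.choose_succ_self_right (p - 1)
        rw [show p - 1 + 1 = p by omega] at h3
        exact h3
      have hcast : ((p : ℕ) : ℚ_[p]⟦X⟧) = C (p : ℚ_[p]) := (map_natCast (C (R := ℚ_[p])) p).symm
      rw [h1, pow_one, h2, hcast, mul_comm (T ^ (p - 1) * D) _, PowerSeries.coeff_C_mul]
      have h4 : coeff N (T ^ (p - 1) * D) = a N := by
        rw [PowerSeries.coeff_mul]
        rw [Finset.sum_eq_single_of_mem (0, N) (by rw [Finset.HasAntidiagonal.mem_antidiagonal]; omega) ?_]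
        · show coeff 0 (T ^ (p - 1)) * coeff N D = a N
          rw [PowerSeries.coeff_zero_eq_constantCoeff_apply, map_pow, hT0, one_pow, one_mul,
            hDN]
        · rintro ⟨i, j⟩ hij hne
          rw [Finset.HasAntidiagonal.mem_antidiagonal] at hij
          have hjN : j < N := by
            rcases Nat.lt_or_ge j N with h' | h'
            · exact h'
            · exfalso
              apply hne
              have hj' : j = N := by omega
              have hi' : i = 0 := by omega
              rw [hi', hj']
          show coeff i (T ^ (p - 1)) * coeff j D = 0
          rw [hD j hjN, mul_zero]
      rw [h4]
    have hrest : ∀ k ∈ Finset.range (p - 1),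
        coeff N (T ^ k * D ^ (p - k) * ((p.choose k : ℕ) : ℚ_[p]⟦X⟧)) = 0 := by
      intro k hk
      rw [Finset.mem_range] at hk
      have h2k : 2 ≤ p - k := by omega
      rw [show T ^ k * D ^ (p - k) * ((p.choose k : ℕ) : ℚ_[p]⟦X⟧)
        = (T ^ k * ((p.choose k : ℕ) : ℚ_[p]⟦X⟧)) * D ^ (p - k) by ring]
      refine coeff_mul_eq_zero (s := 0) (fun i hi => absurd hi (Nat.not_lt_zero i))
        (fun j' hj' => coeff_pow_eq_zero hD (p - k) hj') ?_
      have hmul : 2 * N ≤ (p - k) * N := Nat.mul_le_mul_right N h2k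
      omega
    rw [Finset.sum_eq_zero hrest, hfp1, hfp, zero_add, add_comm]
  -- step 2 : Frobenius congruence for the truncation
  set Q : Polynomial ℤ_[p] := P ^ p with hQ
  have hTpow : coeff N (T ^ p) = ((Q.coeff N : ℤ_[p]) : ℚ_[p]) := by
    rw [hTdef, ← Polynomial.coe_pow, Polynomial.coeff_coe, ← Polynomial.map_pow,
      Polynomial.coeff_map, ← hQ]
    rfl
  have hfrob : ∀ f : Polynomial (ZMod p), f ^ p = Polynomial.expand (ZMod p) p f := by
    intro f
    have h1 := Polynomial.map_frobenius_expand p (R := ZMod p) f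
    have hid : frobenius (ZMod p) p = RingHom.id _ := by
      refine RingHom.ext fun x => ?_
      rw [frobenius_def, ZMod.pow_card, RingHom.id_apply]
    rw [hid, Polynomial.map_id] at h1
    exact h1.symm
  have hmod : PadicInt.toZMod (Q.coeff N)
      = PadicInt.toZMod (if p ∣ N then P.coeff (N / p) else 0) := by
    have h3 : Polynomial.map (PadicInt.toZMod) Q = (Polynomial.map PadicInt.toZMod P) ^ p := by
      rw [hQ, Polynomial.map_pow]
    have h4 := congrArg (fun f : Polynomial (ZMod p) => f.coeff N)
      (h3.trans (hfrob (Polynomial.map PadicInt.toZMod P)))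
    simp only [Polynomial.coeff_map] at h4
    rw [Polynomial.coeff_expand hppos] at h4
    rw [h4]
    by_cases hdN : p ∣ N
    · rw [if_pos hdN, if_pos hdN, Polynomial.coeff_map]
    · rw [if_neg hdN, if_neg hdN, map_zero]
  have hker : (p : ℤ_[p]) ∣ (Q.coeff N - if p ∣ N then P.coeff (N / p) else 0) := by
    have h5 : PadicInt.toZMod (Q.coeff N - if p ∣ N then P.coeff (N / p) else 0) = 0 := by
      rw [map_sub, hmod, sub_self]
    have h6 : (Q.coeff N - if p ∣ N then P.coeff (N / p) else 0)
        ∈ RingHom.ker (PadicInt.toZMod (p := p)) := by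
      rw [RingHom.mem_ker]
      exact h5
    rw [PadicInt.ker_toZMod, PadicInt.maximalIdeal_eq_span_p, Ideal.mem_span_singleton] at h6
    exact h6
  have hdivlt : p ∣ N → N / p < N := fun _ => Nat.div_lt_self (by omega) hp.one_lt
  have hcoe : ((if p ∣ N then P.coeff (N / p) else 0 : ℤ_[p]) : ℚ_[p])
      = (if p ∣ N then a (N / p) else 0) := by
    by_cases hdN : p ∣ N
    · rw [if_pos hdN, if_pos hdN, hPcoeff, if_pos (hdivlt hdN), hbv _ (hdivlt hdN)]
    · rw [if_neg hdN, if_neg hdN]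
      norm_num
  have hstep2 : ‖coeff N (T ^ p) - (if p ∣ N then a (N / p) else 0)‖ ≤ (p : ℝ)⁻¹ := by
    rw [hTpow, ← hcoe]
    have h7 : ((Q.coeff N : ℤ_[p]) : ℚ_[p]) - ((if p ∣ N then P.coeff (N / p) else 0 : ℤ_[p]) : ℚ_[p])
        = (((Q.coeff N - if p ∣ N then P.coeff (N / p) else 0 : ℤ_[p])) : ℚ_[p]) := by
      push_cast
      ring
    rw [h7, PadicInt.padic_norm_e_of_padicInt]
    obtain ⟨y, hy⟩ := hker
    rw [hy, norm_mul, PadicInt.norm_p]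
    calc (p : ℝ)⁻¹ * ‖y‖ ≤ (p : ℝ)⁻¹ * 1 :=
          mul_le_mul_of_nonneg_left (PadicInt.norm_le_one y) (le_of_lt hpR)
      _ = (p : ℝ)⁻¹ := mul_one _
  -- step 3 : the right-hand side of the functional equation
  have hmem : ((N, 0) : ℕ × ℕ) ∈ Finset.HasAntidiagonal.antidiagonal N := by
    rw [Finset.HasAntidiagonal.mem_antidiagonal]
    show N + 0 = N
    omega
  have hsplit2 : coeff N (ex (E (g c)) * E (h c))
      = (if p ∣ N then a (N / p) else 0)
        + ∑ x ∈ (Finset.HasAntidiagonal.antidiagonal N).erase (N, 0),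
            coeff x.1 (ex (E (g c))) * coeff x.2 (E (h c)) := by
    rw [PowerSeries.coeff_mul, ← Finset.add_sum_erase _ _ hmem]
    congr 1
    show coeff N (ex (E (g c))) * coeff 0 (E (h c)) = _
    rw [PowerSeries.coeff_zero_eq_constantCoeff_apply, constantCoeff_E, mul_one, coeff_ex]
    by_cases hdN : p ∣ N
    · rw [if_pos hdN, if_pos hdN, coeff_E]
    · rw [if_neg hdN, if_neg hdN]
  have hstep3 : ‖coeff N (ex (E (g c)) * E (h c))
      - (if p ∣ N then a (N / p) else 0)‖ ≤ (p : ℝ)⁻¹ := by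
    rw [hsplit2, add_sub_cancel_left]
    refine IsUltrametricDist.norm_sum_le_of_forall_le_of_nonneg (le_of_lt hpR) ?_
    rintro ⟨i, j⟩ hij
    rw [Finset.mem_erase, Finset.HasAntidiagonal.mem_antidiagonal] at hij
    have hj1 : 1 ≤ j := by
      rcases Nat.eq_zero_or_pos j with rfl | h'
      · exfalso
        apply hij.1
        have : i = N := by omega
        rw [this]
      · exact h'
    have hiN : i < N := by omega
    show ‖coeff i (ex (E (g c))) * coeff j (E (h c))‖ ≤ (p : ℝ)⁻¹
    have hnorm1 : ‖coeff i (ex (E (g c)))‖ ≤ 1 := by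
      rw [coeff_ex]
      by_cases hdi : p ∣ i
      · rw [if_pos hdi, coeff_E]
        exact ih (i / p) (lt_of_le_of_lt (Nat.div_le_self i p) hiN)
      · rw [if_neg hdi, norm_zero]
        norm_num
    have hnorm2 : ‖coeff j (E (h c))‖ ≤ (p : ℝ)⁻¹ := by
      rw [coeff_E]
      exact norm_A_le (hh_norm c hc) hj1
    calc ‖coeff i (ex (E (g c))) * coeff j (E (h c))‖
        = ‖coeff i (ex (E (g c)))‖ * ‖coeff j (E (h c))‖ := norm_mul _ _
      _ ≤ 1 * (p : ℝ)⁻¹ := mul_le_mul hnorm1 hnorm2 (norm_nonneg _) zero_le_one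
      _ = (p : ℝ)⁻¹ := one_mul _
  -- conclusion
  have hfe := congrArg (coeff N) (main_eq c)
  rw [step1] at hfe
  have hpan : (p : ℚ_[p]) * a N
      = (coeff N (ex (E (g c)) * E (h c)) - (if p ∣ N then a (N / p) else 0))
        - (coeff N (T ^ p) - (if p ∣ N then a (N / p) else 0)) := by
    rw [← hfe]
    ring
  have hnorm : ‖(p : ℚ_[p]) * a N‖ ≤ (p : ℝ)⁻¹ := by
    rw [hpan, sub_eq_add_neg]
    refine le_trans (Padic.nonarchimedean _ _) ?_
    rw [norm_neg]
    exact max_le hstep3 hstep2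
  rw [norm_mul, Padic.norm_p] at hnorm
  have hfin := mul_le_mul_of_nonneg_left hnorm (show (0 : ℝ) ≤ p by positivity)
  rw [← mul_assoc, mul_inv_cancel₀ (show (p : ℝ) ≠ 0 by positivity), one_mul] at hfin
  exact hfin

end Main2

end DworkAux

open PowerSeries

/-- If `(c_n)` in `ℤ_p` satisfies `c_{k p^{r+1}} ≡ c_{k p^r} (mod p^{r+1})` for all `k, r`,
then `exp (∑_{n ≥ 1} (c_n/n) x^n)` has all its coefficients in `ℤ_p`: the `N`-th coefficient of
the formal exponential, namely `∑_{k ≤ N} coeff_N (g^k)/k!` where `g = ∑_{n ≥ 1} (c_n/n) x^n`,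
has `p`-adic norm at most `1`. -/
theorem stmt_3 (p : ℕ) [Fact p.Prime] (c : ℕ → ℤ_[p])
    (hc : ∀ k r : ℕ, (p : ℤ_[p]) ^ (r + 1) ∣ c (k * p ^ (r + 1)) - c (k * p ^ r)) :
    ∀ N : ℕ, ‖∑ k ∈ Finset.range (N + 1),
        (coeff (R := ℚ_[p]) N
          ((PowerSeries.mk fun n => if n = 0 then 0 else ((c n : ℚ_[p]) / (n : ℚ_[p]))) ^ k))
          / (k.factorial : ℚ_[p])‖ ≤ 1 := by
  intro N
  exact DworkAux.norm_A_g_le c hc N
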